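/- Let G be a non-precompact topological group. Then there exists a neighborhood U of the identity such that for every sequence (K_n) of compact subsets of G there exists a sequence (g_n) of elements of G with U·K_m·g_m ∩ U·K_n·g_n = ∅ whenever m ≠ n. -/

import Mathlib

open Filter Topology Pointwise

/-- Approximate B.H. Neumann covering lemma: if a group is covered by finitely many
sets of the form `a * V * b` with `V` symmetric, then it is covered by finitely many
left translates of `V * V`. Induction on the number of distinct right translators. -/
theorem neumann_cover {G : Type*} [Group G] [DecidableEq G] (V : Set G) (hV : ∀ v ∈ V, v⁻¹ ∈ V) :
    ∀ (r : ℕ) (I : Finset (G × G)),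
      (I.image Prod.snd).card ≤ r →
      (∀ x : G, ∃ p ∈ I, ∃ v ∈ V, x = p.1 * v * p.2) →
      ∃ F : Finset G, ∀ x : G, ∃ f ∈ F, ∃ v ∈ V, ∃ w ∈ V, x = f * v * w := by
  classical
  intro r
  induction r with
  | zero =>
      intro I hc hcov
      obtain ⟨p, hp, -⟩ := hcov 1
      have hmem : p.2 ∈ I.image Prod.snd := Finset.mem_image_of_mem _ hp
      rw [Nat.le_zero, Finset.card_eq_zero] at hc
      rw [hc] at hmem
      exact absurd hmem (Finset.notMem_empty _)
  | succ r ih =>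
      intro I hc hcov
      obtain ⟨p₀, hp₀, -⟩ := hcov 1
      set b₀ := p₀.2 with hb₀
      set Z : Finset G := (I.filter fun p => p.2 = b₀).image (fun p => p.1 * b₀) with hZ
      by_cases hA : ∀ x : G, ∃ z ∈ Z, ∃ v ∈ V, ∃ w ∈ V, x = z * b₀⁻¹ * v * w
      · refine ⟨Z.image fun z => z * b₀⁻¹, fun x => ?_⟩
        obtain ⟨z, hz, v, hv, w, hw, hx⟩ := hA x
        exact ⟨z * b₀⁻¹, Finset.mem_image_of_mem _ hz, v, hv, w, hw, hx⟩
      · push_neg at hA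
        obtain ⟨y, hy⟩ := hA
        set J : Finset (G × G) := I.filter fun p => p.2 ≠ b₀ with hJ
        set I' : Finset (G × G) :=
          J ∪ (Z ×ˢ J).image (fun q => (q.1 * b₀⁻¹ * y⁻¹ * q.2.1, q.2.2)) with hI'
        have hJsub : ∀ p ∈ J, p ∈ I ∧ p.2 ≠ b₀ := fun p hp => Finset.mem_filter.mp hp
        have hsub : I'.image Prod.snd ⊆ (I.image Prod.snd).erase b₀ := by
          intro b hb
          rw [Finset.mem_image] at hb
          obtain ⟨p, hp, hpb⟩ := hb
          rw [hI', Finset.mem_union] at hp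
          rcases hp with hp | hp
          · obtain ⟨hpI, hpne⟩ := hJsub p hp
            exact Finset.mem_erase.mpr ⟨hpb ▸ hpne, hpb ▸ Finset.mem_image_of_mem _ hpI⟩
          · rw [Finset.mem_image] at hp
            obtain ⟨q, hq, hqp⟩ := hp
            rw [Finset.mem_product] at hq
            obtain ⟨hq2I, hq2ne⟩ := hJsub q.2 hq.2
            have h2 : p.2 = q.2.2 := by rw [← hqp]
            rw [h2] at hpb
            exact Finset.mem_erase.mpr ⟨hpb ▸ hq2ne, hpb ▸ Finset.mem_image_of_mem _ hq2I⟩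
        have hcard : (I'.image Prod.snd).card ≤ r := by
          have h1 : b₀ ∈ I.image Prod.snd := Finset.mem_image_of_mem _ hp₀
          have h2 := Finset.card_le_card hsub
          rw [Finset.card_erase_of_mem h1] at h2
          omega
        have hcov' : ∀ x : G, ∃ p ∈ I', ∃ v ∈ V, x = p.1 * v * p.2 := by
          intro x
          obtain ⟨p, hp, v, hv, hx⟩ := hcov x
          by_cases hpb : p.2 = b₀
          · obtain ⟨q, hq, u, hu, ht⟩ := hcov (y * v * b₀)
            by_cases hqb : q.2 = b₀
            · exfalso
              have hzq : q.1 * b₀ ∈ Z :=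
                Finset.mem_image_of_mem _ (Finset.mem_filter.mpr ⟨hq, hqb⟩)
              refine hy (q.1 * b₀) hzq u hu v⁻¹ (hV v hv) ?_
              have h3 : y * v * b₀ = q.1 * u * b₀ := by rw [ht, hqb]
              have h4 : y * v = q.1 * u := mul_right_cancel h3
              calc y = y * v * v⁻¹ := by group
                _ = q.1 * u * v⁻¹ := by rw [h4]
                _ = q.1 * b₀ * b₀⁻¹ * u * v⁻¹ := by group
            · have hqJ : q ∈ J := Finset.mem_filter.mpr ⟨hq, hqb⟩
              have hzZ : p.1 * b₀ ∈ Z :=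
                Finset.mem_image_of_mem _ (Finset.mem_filter.mpr ⟨hp, hpb⟩)
              refine ⟨(p.1 * b₀ * b₀⁻¹ * y⁻¹ * q.1, q.2), ?_, u, hu, ?_⟩
              · rw [hI', Finset.mem_union]
                right
                rw [Finset.mem_image]
                exact ⟨(p.1 * b₀, q), Finset.mem_product.mpr ⟨hzZ, hqJ⟩, rfl⟩
              · calc x = p.1 * v * b₀ := by rw [hx, hpb]
                  _ = p.1 * y⁻¹ * (y * v * b₀) := by group
                  _ = p.1 * y⁻¹ * (q.1 * u * q.2) := by rw [ht]
                  _ = p.1 * b₀ * b₀⁻¹ * y⁻¹ * q.1 * u * q.2 := by group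
          · refine ⟨p, ?_, v, hv, hx⟩
            rw [hI', Finset.mem_union]
            exact Or.inl (Finset.mem_filter.mpr ⟨hp, hpb⟩)
        exact ih I' hcard hcov'

/-- If a Hausdorff topological group `G` is not precompact, then there is an identity
neighborhood `U` such that for every sequence `(K_n)` of compact subsets there is a
sequence `(g_n)` in `G` with `U·K_m·g_m ∩ U·K_n·g_n = ∅` for `m ≠ n`. -/
theorem stmt5 {G : Type*} [Group G] [TopologicalSpace G] [IsTopologicalGroup G] [T2Space G]
    (h : ¬ ∀ U ∈ 𝓝 (1 : G), ∃ F : Finset G, ∀ g : G, ∃ u ∈ U, ∃ f ∈ F, g = u * f) :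
    ∃ U ∈ 𝓝 (1 : G), ∀ K : ℕ → Set G, (∀ n, IsCompact (K n)) →
      ∃ g : ℕ → G, ∀ m n : ℕ, m ≠ n →
        (U * K m * {g m}) ∩ (U * K n * {g n}) = ∅ := by
  classical
  push_neg at h
  obtain ⟨U₀, hU₀mem, hU₀⟩ := h
  -- build a symmetric neighborhood V with V^8 ⊆ U₀
  obtain ⟨V₁, hV₁o, hV₁1, hV₁⟩ := exists_open_nhds_one_mul_subset hU₀mem
  obtain ⟨V₂, hV₂o, hV₂1, hV₂⟩ := exists_open_nhds_one_mul_subset (hV₁o.mem_nhds hV₁1)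
  obtain ⟨V₃, hV₃o, hV₃1, hV₃⟩ := exists_open_nhds_one_mul_subset (hV₂o.mem_nhds hV₂1)
  set V : Set G := V₃ ∩ V₃⁻¹ with hVdef
  have hVV₃ : V ⊆ V₃ := Set.inter_subset_left
  have hVmem : V ∈ 𝓝 (1 : G) := by
    apply Filter.inter_mem (hV₃o.mem_nhds hV₃1)
    exact (hV₃o.inv).mem_nhds (by rw [Set.mem_inv, inv_one]; exact hV₃1)
  have hVsym : ∀ v ∈ V, v⁻¹ ∈ V := by
    intro v hv
    obtain ⟨h1, h2⟩ := hv
    exact ⟨Set.mem_inv.mp h2, by rw [Set.mem_inv, inv_inv]; exact h1⟩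
  have hmul2 : ∀ a ∈ V₃, ∀ b ∈ V₃, a * b ∈ V₂ := fun a ha b hb => hV₃ (Set.mul_mem_mul ha hb)
  have hmul4 : ∀ a ∈ V₂, ∀ b ∈ V₂, a * b ∈ V₁ := fun a ha b hb => hV₂ (Set.mul_mem_mul ha hb)
  have hmul8 : ∀ a ∈ V₁, ∀ b ∈ V₁, a * b ∈ U₀ := fun a ha b hb => hV₁ (Set.mul_mem_mul ha hb)
  have hV8 : ∀ a ∈ V, ∀ b ∈ V, ∀ c ∈ V, ∀ d ∈ V, ∀ e ∈ V, ∀ f ∈ V, ∀ i ∈ V, ∀ j ∈ V,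
      a * b * c * d * e * f * i * j ∈ U₀ := by
    intro a ha b hb c hc d hd e he f hf i hi j hj
    have h1 : (a * b) * (c * d) ∈ V₁ :=
      hmul4 _ (hmul2 _ (hVV₃ ha) _ (hVV₃ hb)) _ (hmul2 _ (hVV₃ hc) _ (hVV₃ hd))
    have h2 : (e * f) * (i * j) ∈ V₁ :=
      hmul4 _ (hmul2 _ (hVV₃ he) _ (hVV₃ hf)) _ (hmul2 _ (hVV₃ hi) _ (hVV₃ hj))
    have h3 : a * b * c * d * e * f * i * j = ((a * b) * (c * d)) * ((e * f) * (i * j)) := by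
      group
    rw [h3]
    exact hmul8 _ h1 _ h2
  refine ⟨V, hVmem, ?_⟩
  intro K hK
  -- the set V4 = V*V*V*V (pointwise description)
  set V4 : Set G := {x : G | ∃ v₁ ∈ V, ∃ v₂ ∈ V, ∃ v₃ ∈ V, ∃ v₄ ∈ V, x = v₁ * v₂ * v₃ * v₄}
    with hV4def
  have hV4sym : ∀ v ∈ V4, v⁻¹ ∈ V4 := by
    rintro v ⟨v₁, h1, v₂, h2, v₃, h3, v₄, h4, rfl⟩
    exact ⟨v₄⁻¹, hVsym _ h4, v₃⁻¹, hVsym _ h3, v₂⁻¹, hVsym _ h2, v₁⁻¹, hVsym _ h1, by group⟩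
  -- key step: greedy choice is always possible
  have key : ∀ (n : ℕ) (f : ℕ → G), ∃ x : G, ∀ m, m < n → ∀ u ∈ V, ∀ v ∈ V,
      ∀ k ∈ K n, ∀ k' ∈ K m, x ≠ k⁻¹ * u * v * k' * f m := by
    intro n f
    by_contra hcon
    push_neg at hcon
    -- cover (K n)⁻¹ by left translates a * V
    have hKninv : IsCompact (K n)⁻¹ := (hK n).inv
    obtain ⟨A, -, hA⟩ := hKninv.elim_nhds_subcover (fun a => (a * ·) '' V)
      (fun a _ => by rw [← map_mul_left_nhds_one a]; exact Filter.image_mem_map hVmem)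
    -- cover each K m by right translates V * b
    have hcovm : ∀ m : ℕ, ∃ B : Finset G, K m ⊆ ⋃ b ∈ B, (· * b) '' V := by
      intro m
      obtain ⟨B, -, hB⟩ := (hK m).elim_nhds_subcover (fun b => (· * b) '' V)
        (fun b _ => by rw [← map_mul_right_nhds_one b]; exact Filter.image_mem_map hVmem)
      exact ⟨B, hB⟩
    choose B hB using hcovm
    set I : Finset (G × G) :=
      (Finset.range n).biUnion (fun m => (A ×ˢ B m).image (fun q => (q.1, q.2 * f m))) with hI
    have hcover : ∀ x : G, ∃ p ∈ I, ∃ v ∈ V4, x = p.1 * v * p.2 := by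
      intro x
      obtain ⟨m, hm, u, hu, v, hv, k, hk, k', hk', hx⟩ := hcon x
      have hkinv : k⁻¹ ∈ (K n)⁻¹ := by rw [Set.mem_inv, inv_inv]; exact hk
      have hmemA := hA hkinv
      rw [Set.mem_iUnion₂] at hmemA
      obtain ⟨a, haA, w₁, hw₁, hae⟩ := hmemA
      have hmemB := hB m hk'
      rw [Set.mem_iUnion₂] at hmemB
      obtain ⟨b, hbB, w₄, hw₄, hbe⟩ := hmemB
      refine ⟨(a, b * f m), ?_, w₁ * u * v * w₄,
        ⟨w₁, hw₁, u, hu, v, hv, w₄, hw₄, rfl⟩, ?_⟩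
      · rw [hI, Finset.mem_biUnion]
        exact ⟨m, Finset.mem_range.mpr hm, Finset.mem_image.mpr
          ⟨(a, b), Finset.mem_product.mpr ⟨haA, hbB⟩, rfl⟩⟩
      · have hae' : a * w₁ = k⁻¹ := hae
        have hbe' : w₄ * b = k' := hbe
        calc x = k⁻¹ * u * v * k' * f m := hx
          _ = (a * w₁) * u * v * ((w₄ * b) * f m) := by rw [hae', hbe']; group
          _ = a * (w₁ * u * v * w₄) * (b * f m) := by group
    obtain ⟨F, hF⟩ := neumann_cover V4 hV4sym ((I.image Prod.snd).card) I le_rfl hcover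
    obtain ⟨g₀, hg₀⟩ := hU₀ (F.image (fun f => f⁻¹))
    obtain ⟨f₀, hf₀, vb, hvb, wb, hwb, hg⟩ := hF g₀⁻¹
    obtain ⟨v₁, h1, v₂, h2, v₃, h3, v₄, h4, hveq⟩ := hvb
    obtain ⟨w₁, hw1, w₂, hw2, w₃, hw3, w₄, hw4, hweq⟩ := hwb
    have hu : w₄⁻¹ * w₃⁻¹ * w₂⁻¹ * w₁⁻¹ * v₄⁻¹ * v₃⁻¹ * v₂⁻¹ * v₁⁻¹ ∈ U₀ :=
      hV8 _ (hVsym _ hw4) _ (hVsym _ hw3) _ (hVsym _ hw2) _ (hVsym _ hw1)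
        _ (hVsym _ h4) _ (hVsym _ h3) _ (hVsym _ h2) _ (hVsym _ h1)
    refine hg₀ _ hu f₀⁻¹ (Finset.mem_image_of_mem _ hf₀) ?_
    have hgg : g₀ = (f₀ * vb * wb)⁻¹ := by rw [← hg, inv_inv]
    rw [hgg, hveq, hweq]
    group
  -- construct the sequence by recursion with choice
  let T : ℕ → ℕ → G := fun n => Nat.rec (motive := fun _ => ℕ → G) (fun _ => (1 : G))
    (fun n prev => Function.update prev n (Classical.choose (key n prev))) n
  have hT : ∀ n : ℕ, T (n + 1) = Function.update (T n) n (Classical.choose (key n (T n))) :=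
    fun n => rfl
  set g : ℕ → G := fun n => T (n + 1) n with hgdef
  have hagree : ∀ m n : ℕ, m < n → T n m = g m := by
    intro m n hmn
    induction n with
    | zero => omega
    | succ n ihn =>
        rcases Nat.lt_succ_iff_lt_or_eq.mp hmn with h' | h'
        · rw [hT n, Function.update_of_ne (by omega : m ≠ n)]
          exact ihn h'
        · subst h'; rfl
  have hgood : ∀ n m, m < n → ∀ u ∈ V, ∀ v ∈ V, ∀ k ∈ K n, ∀ k' ∈ K m,
      g n ≠ k⁻¹ * u * v * k' * g m := by
    intro n m hm u hu v hv k hk k' hk'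
    have hgn : g n = Classical.choose (key n (T n)) := by
      show T (n + 1) n = _
      rw [hT n, Function.update_self]
    have hspec := Classical.choose_spec (key n (T n)) m hm u hu v hv k hk k' hk'
    rw [hgn]
    rwa [hagree m n hm] at hspec
  refine ⟨g, ?_⟩
  have main : ∀ m n : ℕ, m < n → (V * K m * {g m}) ∩ (V * K n * {g n}) = ∅ := by
    intro m n hmn
    rw [Set.eq_empty_iff_forall_notMem]
    rintro x ⟨hx₁, hx₂⟩
    rw [Set.mem_mul] at hx₁ hx₂
    obtain ⟨p, hp, q, hq, hpq⟩ := hx₁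
    obtain ⟨p', hp', q', hq', hpq'⟩ := hx₂
    rw [Set.mem_mul] at hp hp'
    obtain ⟨v, hv, k', hk', hvk⟩ := hp
    obtain ⟨w, hw, k, hk, hwk⟩ := hp'
    rw [Set.mem_singleton_iff] at hq hq'
    have heq : w * k * g n = v * k' * g m := by
      rw [← hwk, hq'] at hpq'
      rw [← hvk, hq] at hpq
      exact hpq'.trans hpq.symm
    have hcontra : g n = k⁻¹ * w⁻¹ * v * k' * g m := by
      calc g n = k⁻¹ * w⁻¹ * (w * k * g n) := by group
        _ = k⁻¹ * w⁻¹ * (v * k' * g m) := by rw [heq]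
        _ = k⁻¹ * w⁻¹ * v * k' * g m := by group
    exact hgood n m hmn w⁻¹ (hVsym w hw) v hv k hk k' hk' hcontra
  intro m n hmn
  rcases hmn.lt_or_gt with hlt | hlt
  · exact main m n hlt
  · rw [Set.inter_comm]
    exact main n m hlt
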